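/- Let h : ℝ → ℝ satisfy h(y) ≥ c₀ + v₀·y + c₂·y² for all y ∈ ℝ, for some constants c₀, v₀ ∈ ℝ and c₂ > 0. Let τ₁ ∈ ℝ and τ₂ > 0. Then: (i) sup_{n∈ℤ} e^{−τ₂ h(−n)} is finite, and there is a unique bounded linear operator T on L²(𝕋) (𝕋 the circle ℝ/2πℤ with normalized Haar measure) satisfying T e_n = e^{(iτ₁ − τ₂) h(−n)} e_n for every n ∈ ℤ, where e_n(x) = e^{inx}; the operator norm of T equals sup_{n∈ℤ} e^{−τ₂ h(−n)}. (ii) For every f ∈ L²(𝕋), the series F(z) = Σ_{n∈ℤ} e^{(iτ₁ − τ₂) h(−n)} f̂(n) e^{inz} converges locally uniformly on all of ℂ, so F is an entire function, and the restriction of F to ℝ descends to a function on 𝕋 equal to Tf almost everywhere. In particular T maps square-integrable functions to real-analytic functions. -/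

import Mathlib

open MeasureTheory Filter
open scoped ENNReal NNReal

lemma quad_bound (a b y : ℝ) (ha : 0 < a) : -a*y^2 + b*y ≤ b^2/(4*a) := by
  rw [le_div_iff₀ (by positivity : (0:ℝ) < 4*a)]
  nlinarith [sq_nonneg (2*a*y - b)]

lemma summable_exp_quad (A B : ℝ) (hA : 0 < A) :
    Summable (fun n : ℤ => Real.exp (-A * (n:ℝ)^2 + B * |(n:ℝ)|)) := by
  have key : Summable (fun n : ℕ => Real.exp (-A * (n:ℝ)^2 + B * (n:ℝ))) := by
    have hsum : Summable (fun n : ℕ => Real.exp ((B+1)^2/(4*A)) * Real.exp (-1:ℝ) ^ n) :=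
      (summable_geometric_of_lt_one (Real.exp_nonneg _)
        (Real.exp_lt_one_iff.mpr (by norm_num))).mul_left _
    refine Summable.of_nonneg_of_le (fun n => (Real.exp_pos _).le) (fun n => ?_) hsum
    rw [← Real.exp_nat_mul, ← Real.exp_add]
    apply Real.exp_le_exp.mpr
    have := quad_bound A (B+1) (n:ℝ) hA
    nlinarith
  apply Summable.of_nat_of_neg
  · have : ∀ n : ℕ, |((n:ℤ):ℝ)| = (n:ℝ) := fun n => by
      rw [Int.cast_natCast, abs_of_nonneg (by positivity)]
    simpa [this] using key
  · have : ∀ n : ℕ, (-A * ((-(n:ℤ) : ℤ):ℝ)^2 + B * |((-(n:ℤ):ℤ):ℝ)|)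
        = -A * (n:ℝ)^2 + B * (n:ℝ) := fun n => by
      push_cast
      rw [abs_of_nonpos (neg_nonpos.mpr (by positivity))]
      ring
    simpa [this] using key

section diag

variable {w : ℤ → ℂ} {S : ℝ}

lemma two_toReal : (2:ℝ≥0∞).toReal = (2:ℝ) := by norm_num

lemma memℓp_diag (hS : 0 ≤ S) (hw : ∀ n, ‖w n‖ ≤ S) (x : lp (fun _ : ℤ => ℂ) 2) :
    Memℓp (fun n => w n * x n) 2 := by
  apply memℓp_gen
  rw [two_toReal]
  have hx := (lp.memℓp x).summable (by norm_num : 0 < (2:ℝ≥0∞).toReal)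
  rw [two_toReal] at hx
  refine Summable.of_nonneg_of_le (fun n => Real.rpow_nonneg (norm_nonneg _) _)
    (fun n => ?_) (hx.mul_left (S ^ (2:ℝ)))
  calc ‖w n * x n‖ ^ (2:ℝ) ≤ (S * ‖x n‖) ^ (2:ℝ) := by
        apply Real.rpow_le_rpow (norm_nonneg _) ?_ (by norm_num)
        rw [norm_mul]; exact mul_le_mul_of_nonneg_right (hw n) (norm_nonneg _)
    _ = S ^ (2:ℝ) * ‖x n‖ ^ (2:ℝ) := Real.mul_rpow hS (norm_nonneg _)

noncomputable def diagLM (hS : 0 ≤ S) (hw : ∀ n, ‖w n‖ ≤ S) :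
    lp (fun _ : ℤ => ℂ) 2 →ₗ[ℂ] lp (fun _ : ℤ => ℂ) 2 where
  toFun x := ⟨fun n => w n * x n, memℓp_diag hS hw x⟩
  map_add' x y := by
    ext n
    simp only [lp.coeFn_add, Pi.add_apply]
    change w n * (x n + y n) = w n * x n + w n * y n
    ring
  map_smul' c x := by
    ext n
    simp only [lp.coeFn_smul, Pi.smul_apply, RingHom.id_apply]
    change w n * (c • x n) = c • (w n * x n)
    simp [smul_eq_mul]; ring

lemma diagLM_apply (hS : 0 ≤ S) (hw : ∀ n, ‖w n‖ ≤ S) (x : lp (fun _ : ℤ => ℂ) 2) (n : ℤ) :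
    (diagLM hS hw x : ∀ _ : ℤ, ℂ) n = w n * x n := rfl

lemma diagLM_norm_le (hS : 0 ≤ S) (hw : ∀ n, ‖w n‖ ≤ S) (x : lp (fun _ : ℤ => ℂ) 2) :
    ‖diagLM hS hw x‖ ≤ S * ‖x‖ := by
  have h2 : (0:ℝ) < (2:ℝ≥0∞).toReal := by norm_num
  rw [← Real.rpow_le_rpow_iff (norm_nonneg _) (by positivity) h2,
    lp.norm_rpow_eq_tsum h2]
  calc ∑' n, ‖(diagLM hS hw x : ∀ _ : ℤ, ℂ) n‖ ^ (2:ℝ≥0∞).toReal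
      ≤ ∑' n, S ^ (2:ℝ≥0∞).toReal * ‖x n‖ ^ (2:ℝ≥0∞).toReal := by
        apply Summable.tsum_le_tsum ?_ ?_ (((lp.memℓp x).summable h2).mul_left _)
        · intro n
          rw [diagLM_apply, ← Real.mul_rpow hS (norm_nonneg _)]
          apply Real.rpow_le_rpow (norm_nonneg _) ?_ h2.le
          rw [norm_mul]; exact mul_le_mul_of_nonneg_right (hw n) (norm_nonneg _)
        · exact (memℓp_diag hS hw x).summable h2
    _ = S ^ (2:ℝ≥0∞).toReal * ‖x‖ ^ (2:ℝ≥0∞).toReal := by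
        rw [tsum_mul_left, lp.norm_rpow_eq_tsum h2]
    _ = (S * ‖x‖) ^ (2:ℝ≥0∞).toReal := (Real.mul_rpow hS (norm_nonneg _)).symm

noncomputable def diagCLM (hS : 0 ≤ S) (hw : ∀ n, ‖w n‖ ≤ S) :
    lp (fun _ : ℤ => ℂ) 2 →L[ℂ] lp (fun _ : ℤ => ℂ) 2 :=
  LinearMap.mkContinuous (diagLM hS hw) S (diagLM_norm_le hS hw)

lemma diagCLM_apply (hS : 0 ≤ S) (hw : ∀ n, ‖w n‖ ≤ S) (x : lp (fun _ : ℤ => ℂ) 2) (n : ℤ) :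
    (diagCLM hS hw x : ∀ _ : ℤ, ℂ) n = w n * x n := rfl

lemma diagCLM_single (hS : 0 ≤ S) (hw : ∀ n, ‖w n‖ ≤ S) (n : ℤ) :
    diagCLM hS hw (lp.single 2 n 1) = w n • lp.single 2 n 1 := by
  ext m
  rw [diagCLM_apply]
  by_cases hm : m = n <;>
    simp [hm, lp.coeFn_smul, lp.single_apply, smul_eq_mul]

end diag

instance : Fact (0 < 2 * Real.pi) := ⟨by positivity⟩

set_option maxHeartbeats 1000000 in
/-- For `K = S¹` and a complexifier `h` with a quadratic lower bound, the operator
`T = e^{iτQ(h)}` (with `τ = τ₁ + iτ₂`, `τ₂ > 0`), acting diagonally on the Fourier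
basis by `T e_n = e^{(iτ₁ − τ₂)h(−n)} e_n`, is a well-defined bounded operator on
`L²(𝕋)` of norm `sup_n e^{−τ₂ h(−n)}`, and it maps every `f ∈ L²(𝕋)` to (the
restriction to `𝕋` of) an entire function given by a locally uniformly convergent
series `F(z) = Σ_n e^{(iτ₁−τ₂)h(−n)} f̂(n) e^{inz}`. -/
theorem heisenberg_complex_time_contraction_circle
    (h : ℝ → ℝ) (c₀ v₀ c₂ : ℝ) (hc₂ : 0 < c₂)
    (hbound : ∀ y : ℝ, c₀ + v₀ * y + c₂ * y ^ 2 ≤ h y)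
    (τ₁ τ₂ : ℝ) (hτ₂ : 0 < τ₂) :
    BddAbove (Set.range fun n : ℤ => Real.exp (-τ₂ * h (-(n : ℝ)))) ∧
    ∃ T : Lp ℂ 2 (@AddCircle.haarAddCircle (2 * Real.pi) _) →L[ℂ]
          Lp ℂ 2 (@AddCircle.haarAddCircle (2 * Real.pi) _),
      (∀ n : ℤ, T (fourierLp 2 n) =
        Complex.exp (((τ₁ : ℂ) * Complex.I - (τ₂ : ℂ)) * (h (-(n : ℝ)) : ℂ)) • fourierLp 2 n) ∧
      (∀ T' : Lp ℂ 2 (@AddCircle.haarAddCircle (2 * Real.pi) _) →L[ℂ]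
          Lp ℂ 2 (@AddCircle.haarAddCircle (2 * Real.pi) _),
        (∀ n : ℤ, T' (fourierLp 2 n) =
          Complex.exp (((τ₁ : ℂ) * Complex.I - (τ₂ : ℂ)) * (h (-(n : ℝ)) : ℂ)) • fourierLp 2 n) →
        T' = T) ∧
      (‖T‖ = ⨆ n : ℤ, Real.exp (-τ₂ * h (-(n : ℝ)))) ∧
      (∀ f : Lp ℂ 2 (@AddCircle.haarAddCircle (2 * Real.pi) _),
        ∃ F : ℂ → ℂ,
          TendstoLocallyUniformly
            (fun (s : Finset ℤ) (z : ℂ) =>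
              ∑ n ∈ s,
                Complex.exp (((τ₁ : ℂ) * Complex.I - (τ₂ : ℂ)) * (h (-(n : ℝ)) : ℂ)) *
                  fourierCoeff (⇑f) n * Complex.exp (Complex.I * (n : ℂ) * z))
            F atTop ∧
          Differentiable ℂ F ∧
          ∃ hper : Function.Periodic (fun x : ℝ => F (x : ℂ)) (2 * Real.pi),
            ⇑(T f) =ᵐ[@AddCircle.haarAddCircle (2 * Real.pi) _] hper.lift) := by
  classical
  set w : ℤ → ℂ :=
    fun n => Complex.exp (((τ₁ : ℂ) * Complex.I - (τ₂ : ℂ)) * (h (-(n : ℝ)) : ℂ)) with hw_def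
  have hwnorm : ∀ n : ℤ, ‖w n‖ = Real.exp (-τ₂ * h (-(n : ℝ))) := by
    intro n
    rw [hw_def, Complex.norm_exp]
    congr 1
    simp [Complex.mul_re, Complex.sub_re, Complex.sub_im, Complex.I_re, Complex.I_im]
  have hquad : ∀ n : ℤ, -τ₂ * h (-(n : ℝ)) ≤ τ₂ * (v₀ ^ 2 / (4 * c₂) - c₀) := by
    intro n
    have h1 := hbound (-(n : ℝ))
    have h2 := quad_bound c₂ (-v₀) (-(n : ℝ)) hc₂
    have e : (-v₀) ^ 2 / (4 * c₂) = v₀ ^ 2 / (4 * c₂) := by ring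
    rw [e] at h2
    have h3 : c₀ - v₀ ^ 2 / (4 * c₂) ≤ h (-(n : ℝ)) := by nlinarith
    have h4 := mul_le_mul_of_nonneg_left h3 hτ₂.le
    nlinarith [h4]
  have hbddAbove : BddAbove (Set.range fun n : ℤ => Real.exp (-τ₂ * h (-(n : ℝ)))) := by
    refine ⟨Real.exp (τ₂ * (v₀ ^ 2 / (4 * c₂) - c₀)), ?_⟩
    rintro _ ⟨n, rfl⟩
    exact Real.exp_le_exp.mpr (hquad n)
  set S : ℝ := ⨆ n : ℤ, Real.exp (-τ₂ * h (-(n : ℝ))) with hS_def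
  have hle_S : ∀ n : ℤ, Real.exp (-τ₂ * h (-(n : ℝ))) ≤ S :=
    fun n => le_ciSup hbddAbove n
  have hS0 : (0 : ℝ) ≤ S := le_trans (Real.exp_pos _).le (hle_S 0)
  have hwS : ∀ n : ℤ, ‖w n‖ ≤ S := fun n => (hwnorm n) ▸ hle_S n
  set B := @fourierBasis (2 * Real.pi) _ with hB_def
  set D := diagCLM hS0 hwS with hD_def
  set T : Lp ℂ 2 (@AddCircle.haarAddCircle (2 * Real.pi) _) →L[ℂ]
      Lp ℂ 2 (@AddCircle.haarAddCircle (2 * Real.pi) _) :=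
    (B.repr.symm.toLinearIsometry.toContinuousLinearMap).comp
      (D.comp B.repr.toLinearIsometry.toContinuousLinearMap) with hT_def
  have hT_apply : ∀ x, T x = B.repr.symm (D (B.repr x)) := fun x => rfl
  have hfB : ∀ n : ℤ, (fourierLp (T := 2 * Real.pi) 2 n) = B n :=
    fun n => (congrFun coe_fourierBasis n).symm
  have hT_basis : ∀ n : ℤ, T (fourierLp 2 n) = w n • fourierLp 2 n := by
    intro n
    rw [hfB n, hT_apply, B.repr_self, hD_def, diagCLM_single hS0 hwS n, _root_.map_smul,
      ← B.repr_self, LinearIsometryEquiv.symm_apply_apply]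
  refine ⟨hbddAbove, T, hT_basis, ?_, ?_, ?_⟩
  · -- uniqueness
    intro T' hT'
    have hdense : Dense
        ((Submodule.span ℂ (Set.range (fourierLp (T := 2 * Real.pi) 2)) : Submodule ℂ _) :
          Set (Lp ℂ 2 (@AddCircle.haarAddCircle (2 * Real.pi) _))) := by
      rw [Submodule.dense_iff_topologicalClosure_eq_top]
      have := B.dense_span
      rwa [hB_def, coe_fourierBasis] at this
    refine ContinuousLinearMap.ext_on hdense ?_
    rintro _ ⟨n, rfl⟩
    rw [hT' n, hT_basis n]
  · -- norm
    apply le_antisymm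
    · apply ContinuousLinearMap.opNorm_le_bound _ hS0
      intro x
      rw [hT_apply, LinearIsometryEquiv.norm_map]
      calc ‖D (B.repr x)‖ ≤ S * ‖B.repr x‖ := diagLM_norm_le hS0 hwS (B.repr x)
        _ = S * ‖x‖ := by rw [LinearIsometryEquiv.norm_map]
    · apply ciSup_le
      intro n
      have h1 : ‖fourierLp (T := 2 * Real.pi) 2 n‖ = 1 := orthonormal_fourier.1 n
      calc Real.exp (-τ₂ * h (-(n : ℝ))) = ‖w n‖ := (hwnorm n).symm
        _ = ‖T (fourierLp 2 n)‖ := by rw [hT_basis n, norm_smul, h1, mul_one]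
        _ ≤ ‖T‖ * ‖fourierLp (T := 2 * Real.pi) 2 n‖ := T.le_opNorm _
        _ = ‖T‖ := by rw [h1, mul_one]
  · -- part (ii)
    intro f
    set a : ℤ → ℂ := fun n => fourierCoeff (⇑f) n with ha_def
    have ha_repr : ∀ n : ℤ, B.repr f n = a n := fun n => fourierBasis_repr f n
    have ha_bound : ∀ n : ℤ, ‖a n‖ ≤ ‖f‖ := by
      intro n
      rw [← ha_repr n]
      calc ‖B.repr f n‖ ≤ ‖B.repr f‖ := lp.norm_apply_le_norm (by norm_num) _ n
        _ = ‖f‖ := B.repr.norm_map f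
    set C : ℝ := ‖f‖ * Real.exp (-τ₂ * c₀) with hC_def
    have hgz : ∀ (R : ℝ), 0 ≤ R → ∀ (n : ℤ) (z : ℂ), ‖z‖ ≤ R →
        ‖w n * a n * Complex.exp (Complex.I * (n : ℂ) * z)‖ ≤
          C * Real.exp (-(τ₂ * c₂) * (n : ℝ) ^ 2 + (τ₂ * |v₀| + R) * |(n : ℝ)|) := by
      intro R hR n z hz
      have e1 : ‖Complex.exp (Complex.I * (n : ℂ) * z)‖ = Real.exp (-(n : ℝ) * z.im) := by
        rw [Complex.norm_exp]
        congr 1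
        simp [Complex.mul_re, Complex.mul_im, Complex.I_re, Complex.I_im]
      have him : -(n : ℝ) * z.im ≤ |(n : ℝ)| * R := by
        calc -(n : ℝ) * z.im ≤ |(-(n : ℝ)) * z.im| := le_abs_self _
          _ = |(n : ℝ)| * |z.im| := by rw [abs_mul, abs_neg]
          _ ≤ |(n : ℝ)| * R := by
              apply mul_le_mul_of_nonneg_left ?_ (abs_nonneg _)
              exact le_trans (Complex.abs_im_le_norm z) hz
      have hexp : -τ₂ * h (-(n : ℝ)) + -(n : ℝ) * z.im ≤
          -τ₂ * c₀ + (-(τ₂ * c₂) * (n : ℝ) ^ 2 + (τ₂ * |v₀| + R) * |(n : ℝ)|) := by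
        have h1 := mul_le_mul_of_nonneg_left (hbound (-(n : ℝ))) hτ₂.le
        have h2 : τ₂ * (v₀ * (-(n : ℝ))) ≥ -(τ₂ * (|v₀| * |(n : ℝ)|)) := by
          have : -(|v₀| * |(n : ℝ)|) ≤ v₀ * (-(n : ℝ)) := by
            rw [← abs_neg ((n : ℝ))] at *
            calc -(|v₀| * |(-(n : ℝ))|) = -|v₀ * (-(n : ℝ))| := by rw [abs_mul]
              _ ≤ v₀ * (-(n : ℝ)) := neg_abs_le _
          nlinarith
        nlinarith
      calc ‖w n * a n * Complex.exp (Complex.I * (n : ℂ) * z)‖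
          = ‖w n‖ * ‖a n‖ * ‖Complex.exp (Complex.I * (n : ℂ) * z)‖ := by
            rw [norm_mul, norm_mul]
        _ ≤ Real.exp (-τ₂ * h (-(n : ℝ))) * ‖f‖ * Real.exp (-(n : ℝ) * z.im) := by
            rw [hwnorm n, e1]
            apply mul_le_mul_of_nonneg_right ?_ (Real.exp_pos _).le
            exact mul_le_mul_of_nonneg_left (ha_bound n) (Real.exp_pos _).le
        _ = ‖f‖ * Real.exp (-τ₂ * h (-(n : ℝ)) + -(n : ℝ) * z.im) := by
            rw [Real.exp_add]; ring
        _ ≤ C * Real.exp (-(τ₂ * c₂) * (n : ℝ) ^ 2 + (τ₂ * |v₀| + R) * |(n : ℝ)|) := by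
            rw [hC_def, mul_assoc, ← Real.exp_add]
            apply mul_le_mul_of_nonneg_left ?_ (norm_nonneg f)
            exact Real.exp_le_exp.mpr (by linarith [hexp])
    have hu : ∀ R : ℝ, Summable (fun n : ℤ =>
        C * Real.exp (-(τ₂ * c₂) * (n : ℝ) ^ 2 + (τ₂ * |v₀| + R) * |(n : ℝ)|)) :=
      fun R => (summable_exp_quad (τ₂ * c₂) (τ₂ * |v₀| + R) (by positivity)).mul_left _
    set F : ℂ → ℂ := fun z => ∑' n : ℤ, w n * a n * Complex.exp (Complex.I * (n : ℂ) * z)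
      with hF_def
    have hTLU : TendstoLocallyUniformly
        (fun (s : Finset ℤ) (z : ℂ) =>
          ∑ n ∈ s, w n * a n * Complex.exp (Complex.I * (n : ℂ) * z)) F atTop := by
      rw [tendstoLocallyUniformly_iff_forall_isCompact]
      intro K hK
      obtain ⟨R, hR⟩ := hK.isBounded.subset_closedBall 0
      refine tendstoUniformlyOn_tsum (hu (max R 0)) ?_
      intro n z hz
      refine hgz (max R 0) (le_max_right _ _) n z ?_
      have := hR hz
      rw [Metric.mem_closedBall, dist_zero_right] at this
      exact le_trans this (le_max_left _ _)
    have hFdiff : Differentiable ℂ F := by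
      rw [← differentiableOn_univ]
      refine (tendstoLocallyUniformlyOn_univ.mpr hTLU).differentiableOn
        (Eventually.of_forall fun s => Differentiable.differentiableOn ?_) isOpen_univ
      apply Differentiable.fun_sum
      intro n _
      exact ((differentiable_id.const_mul (Complex.I * (n : ℂ))).cexp).const_mul _
    have hper : Function.Periodic (fun x : ℝ => F (x : ℂ)) (2 * Real.pi) := by
      intro x
      simp only [hF_def]
      apply tsum_congr
      intro n
      have h1 : Complex.I * (n : ℂ) * ((x + 2 * Real.pi : ℝ) : ℂ) =
          Complex.I * (n : ℂ) * (x : ℂ) + (n : ℂ) * (2 * (Real.pi : ℂ) * Complex.I) := by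
        push_cast
        ring
      rw [h1, Complex.exp_add, Complex.exp_int_mul_two_pi_mul_I, mul_one]
    set g : ℤ → ℂ := fun n => w n * a n with hg_def
    have hg_sum : Summable g := by
      apply Summable.of_norm
      refine Summable.of_nonneg_of_le (fun n => norm_nonneg _) (fun n => ?_) (hu 0)
      have h0 := hgz 0 le_rfl n 0 (by simp)
      have he : w n * a n * Complex.exp (Complex.I * (n : ℂ) * 0) = g n := by
        simp [hg_def]
      rwa [he] at h0
    have hsumC : Summable (fun n : ℤ => g n • (fourier n : C(AddCircle (2 * Real.pi), ℂ))) := by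
      refine Summable.of_norm_bounded hg_sum.norm ?_
      intro n
      rw [norm_smul]
      have h1 : ‖(fourier n : C(AddCircle (2 * Real.pi), ℂ))‖ ≤ 1 := by
        refine (ContinuousMap.norm_le _ zero_le_one).mpr ?_
        intro x
        rw [fourier_apply]
        exact le_of_eq (Circle.norm_coe _)
      exact mul_le_of_le_one_right (norm_nonneg _) h1
    set GC : C(AddCircle (2 * Real.pi), ℂ) := ∑' n : ℤ, g n • fourier n with hGC_def
    have hGC : HasSum (fun n : ℤ => g n • (fourier n : C(AddCircle (2 * Real.pi), ℂ))) GC :=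
      hsumC.hasSum
    have hLsum : HasSum (fun n : ℤ => g n • (fourierLp (T := 2 * Real.pi) 2 n))
        (ContinuousMap.toLp (E := ℂ) 2 (@AddCircle.haarAddCircle (2 * Real.pi) _) ℂ GC) := by
      have := (ContinuousMap.toLp (E := ℂ) 2
        (@AddCircle.haarAddCircle (2 * Real.pi) _) ℂ).hasSum hGC
      simpa using this
    have hTf_sum : HasSum (fun n : ℤ => g n • (fourierLp (T := 2 * Real.pi) 2 n)) (T f) := by
      have h0 := B.hasSum_repr (T f)
      have hco : ∀ n : ℤ, B.repr (T f) n = g n := by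
        intro n
        rw [hT_apply, LinearIsometryEquiv.apply_symm_apply, hD_def, diagCLM_apply, ha_repr n]
      have h1 : ∀ n : ℤ, B.repr (T f) n • B n = g n • fourierLp (T := 2 * Real.pi) 2 n := by
        intro n
        rw [hco n, hfB n]
      simpa [h1] using h0
    have hTfG : T f = ContinuousMap.toLp (E := ℂ) 2
        (@AddCircle.haarAddCircle (2 * Real.pi) _) ℂ GC := hTf_sum.unique hLsum
    have hae1 : ⇑(T f) =ᵐ[@AddCircle.haarAddCircle (2 * Real.pi) _] ⇑GC := by
      rw [hTfG]
      exact ContinuousMap.coeFn_toLp _ GC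
    have hlift : ∀ x : ℝ, GC (x : AddCircle (2 * Real.pi)) = F (x : ℂ) := by
      intro x
      have hev : HasSum
          (fun n : ℤ => g n • (fourier n) ((x : ℝ) : AddCircle (2 * Real.pi)))
          (GC ((x : ℝ) : AddCircle (2 * Real.pi))) := by
        convert (ContinuousMap.evalCLM ℂ ((x : ℝ) : AddCircle (2 * Real.pi))).hasSum hGC
        rfl
        rfl
      have hterm : ∀ n : ℤ,
          g n • (fourier n) ((x : ℝ) : AddCircle (2 * Real.pi)) =
          w n * a n * Complex.exp (Complex.I * (n : ℂ) * (x : ℂ)) := by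
        intro n
        have hπ : (Real.pi : ℂ) ≠ 0 := Complex.ofReal_ne_zero.mpr Real.pi_ne_zero
        have harg : 2 * (Real.pi : ℂ) * Complex.I * (n : ℂ) * (x : ℂ) /
            ((2 * Real.pi : ℝ) : ℂ) = Complex.I * (n : ℂ) * (x : ℂ) := by
          push_cast
          field_simp
        rw [fourier_coe_apply, harg, smul_eq_mul, hg_def]
      rw [hF_def]
      simp only
      rw [← hev.tsum_eq]
      exact tsum_congr hterm
    refine ⟨F, hTLU, hFdiff, hper, ?_⟩
    have hlift2 : (hper.lift : AddCircle (2 * Real.pi) → ℂ) = ⇑GC := by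
      funext aa
      induction aa using QuotientAddGroup.induction_on with
      | H x => exact (hper.lift_coe x).trans (hlift x).symm
    rw [hlift2]
    exact hae1
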